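/- arXiv:2206.03599 — 5 statements merged into one kernel-verified Lean document; each statement's English description precedes it below -/
import Mathlib

section
/- Let F_2^6 carry a nondegenerate alternating form. If a 4-dimensional linear subspace W of F_2^6 contains a totally isotropic 3-dimensional subspace, then W contains exactly three totally isotropic 3-dimensional subspaces, and these three subspaces pairwise intersect in a common totally isotropic 2-dimensional subspace. -/
/-- A submodule is totally isotropic for a bilinear form `B` if `B` vanishes identically
on it. -/
def IsTotallyIsotropic {F V : Type*} [Field F] [AddCommGroup V] [Module F V]
    (B : V →ₗ[F] V →ₗ[F] F) (S : Submodule F V) : Prop :=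
  ∀ x ∈ S, ∀ y ∈ S, B x y = 0

open Module Submodule in
/-- If a 4-dimensional linear subspace `W` of `F_2^6` (with a nondegenerate alternating
form) contains a totally isotropic 3-dimensional subspace, then it contains exactly three
such subspaces, and these pass through a common totally isotropic 2-dimensional subspace. -/
theorem three_ti_planes_through_common_line
    (B : (Fin 6 → ZMod 2) →ₗ[ZMod 2] (Fin 6 → ZMod 2) →ₗ[ZMod 2] ZMod 2)
    (halt : ∀ x, B x x = 0)
    (hnd : ∀ x, (∀ y, B x y = 0) → x = 0)
    (W : Submodule (ZMod 2) (Fin 6 → ZMod 2))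
    (hW : Module.finrank (ZMod 2) W = 4)
    (hex : ∃ T : Submodule (ZMod 2) (Fin 6 → ZMod 2),
      T ≤ W ∧ IsTotallyIsotropic B T ∧ Module.finrank (ZMod 2) T = 3) :
    Nat.card {T : Submodule (ZMod 2) (Fin 6 → ZMod 2) //
        T ≤ W ∧ IsTotallyIsotropic B T ∧ Module.finrank (ZMod 2) T = 3} = 3 ∧
    ∃ L : Submodule (ZMod 2) (Fin 6 → ZMod 2),
      L ≤ W ∧ IsTotallyIsotropic B L ∧ Module.finrank (ZMod 2) L = 2 ∧
      ∀ T : Submodule (ZMod 2) (Fin 6 → ZMod 2),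
        T ≤ W → IsTotallyIsotropic B T → Module.finrank (ZMod 2) T = 3 → L ≤ T := by
  classical
  obtain ⟨T0, hT0W, hT0iso, hT0rk⟩ := hex
  have hrefl : B.IsRefl := LinearMap.IsAlt.isRefl halt
  have hBnd : LinearMap.BilinForm.Nondegenerate B := hrefl.nondegenerate_iff_separatingLeft.mpr hnd
  have horth : ∀ S : Submodule (ZMod 2) (Fin 6 → ZMod 2),
      finrank (ZMod 2) (LinearMap.BilinForm.orthogonal B S) = 6 - finrank (ZMod 2) S := by
    intro S
    rw [LinearMap.BilinForm.finrank_orthogonal hBnd]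
    simp
  set L := LinearMap.BilinForm.orthogonal B W with hLdef
  -- every TI 3-space inside W contains L
  have key : ∀ T : Submodule (ZMod 2) (Fin 6 → ZMod 2),
      T ≤ W → IsTotallyIsotropic B T → finrank (ZMod 2) T = 3 → L ≤ T := by
    intro T hTW hTiso hTrk
    have h1 : T ≤ LinearMap.BilinForm.orthogonal B T := by
      intro x hx n hn
      exact hTiso n hn x hx
    have h2 : T = LinearMap.BilinForm.orthogonal B T := by
      apply Submodule.eq_of_le_of_finrank_le h1
      rw [horth, hTrk]
    calc L ≤ LinearMap.BilinForm.orthogonal B T := LinearMap.BilinForm.orthogonal_le hTW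
      _ = T := h2.symm
  have hLT0 : L ≤ T0 := key T0 hT0W hT0iso hT0rk
  have hLW : L ≤ W := hLT0.trans hT0W
  have hLiso : IsTotallyIsotropic B L := fun x hx y hy => hT0iso x (hLT0 hx) y (hLT0 hy)
  have hLrk : finrank (ZMod 2) L = 2 := by rw [horth, hW]
  -- rank of L ⊔ span z for z ∉ L
  have hrank3 : ∀ z : Fin 6 → ZMod 2, z ∉ L →
      finrank (ZMod 2) ↥(L ⊔ span (ZMod 2) {z}) = 3 := by
    intro z hz
    have hz0 : z ≠ 0 := fun h => hz (h ▸ L.zero_mem)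
    have h1 : finrank (ZMod 2) (span (ZMod 2) {z}) = 1 := finrank_span_singleton hz0
    have h2 := Submodule.finrank_sup_add_finrank_inf_eq L (span (ZMod 2) {z})
    have hlt : L < L ⊔ span (ZMod 2) {z} :=
      lt_of_le_of_ne le_sup_left
        (fun h => hz (by rw [h]; exact mem_sup_right (mem_span_singleton_self z)))
    have h4 := Submodule.finrank_lt_finrank_of_lt hlt
    omega
  -- T = L ⊔ span x for any x ∈ T \ L when T has rank 3 between L and W
  have hsup : ∀ (T : Submodule (ZMod 2) (Fin 6 → ZMod 2)) (x : Fin 6 → ZMod 2),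
      L ≤ T → finrank (ZMod 2) T = 3 → x ∈ T → x ∉ L → T = L ⊔ span (ZMod 2) {x} := by
    intro T x hLT hTrk hxT hxL
    have hle : L ⊔ span (ZMod 2) {x} ≤ T :=
      sup_le hLT ((span_singleton_le_iff_mem x T).mpr hxT)
    refine (Submodule.eq_of_le_of_finrank_le hle ?_).symm
    rw [hrank3 x hxL, hTrk]
  -- shifting the generator by an element of L does not change the sup
  have hshift : ∀ (l z : Fin 6 → ZMod 2), l ∈ L →
      L ⊔ span (ZMod 2) {(l + z)} = L ⊔ span (ZMod 2) {z} := by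
    intro l z hl
    apply le_antisymm
    · refine sup_le le_sup_left ((span_singleton_le_iff_mem _ _).mpr ?_)
      exact add_mem (mem_sup_left hl) (mem_sup_right (mem_span_singleton_self z))
    · refine sup_le le_sup_left ((span_singleton_le_iff_mem _ _).mpr ?_)
      have hz : (-l) + (l + z) ∈ L ⊔ span (ZMod 2) {l + z} :=
        add_mem (mem_sup_left (neg_mem hl))
          (mem_sup_right (mem_span_singleton_self (l + z)))
      simpa using hz
  -- every rank-3 space between L and W is totally isotropic
  have hTIof : ∀ T : Submodule (ZMod 2) (Fin 6 → ZMod 2),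
      L ≤ T → T ≤ W → finrank (ZMod 2) T = 3 → IsTotallyIsotropic B T := by
    intro T hLT hTW hTrk x hx y hy
    by_cases hyL : y ∈ L
    · exact hyL x (hTW hx)
    · by_cases hxL : x ∈ L
      · exact hrefl _ _ (hxL y (hTW hy))
      · have hT := hsup T x hLT hTrk hx hxL
        rw [hT] at hy
        obtain ⟨l, hl, z, hz, rfl⟩ := Submodule.mem_sup.mp hy
        obtain ⟨c, rfl⟩ := Submodule.mem_span_singleton.mp hz
        rcases (show ∀ c : ZMod 2, c = 0 ∨ c = 1 by decide) c with rfl | rfl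
        · exfalso; apply hyL; simpa using hl
        · have h1 : B x l = 0 := hl x (hTW hx)
          simp [map_add, h1, halt x]
  -- pick u ∈ W \ L and v ∈ W \ (L ⊔ span u)
  have hexists : ∀ (P Q : Submodule (ZMod 2) (Fin 6 → ZMod 2)),
      finrank (ZMod 2) P < finrank (ZMod 2) Q → ∃ x, x ∈ Q ∧ x ∉ P := by
    intro P Q h
    by_contra hc
    push_neg at hc
    have hQP : Q ≤ P := fun x hx => hc x hx
    have := Submodule.finrank_mono hQP
    omega
  obtain ⟨u, huW, huL⟩ := hexists L W (by omega)
  set T1 : Submodule (ZMod 2) (Fin 6 → ZMod 2) := L ⊔ span (ZMod 2) {u} with hT1def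
  have hT1rk : finrank (ZMod 2) T1 = 3 := hrank3 u huL
  have hT1W : T1 ≤ W := sup_le hLW ((span_singleton_le_iff_mem _ _).mpr huW)
  obtain ⟨v, hvW, hvT1⟩ := hexists T1 W (by omega)
  have hvL : v ∉ L := fun h => hvT1 (mem_sup_left h)
  set T2 : Submodule (ZMod 2) (Fin 6 → ZMod 2) := L ⊔ span (ZMod 2) {v} with hT2def
  have huvL : u + v ∉ L := by
    intro h
    exact hvT1 (by
      have : v = (-u) + (u + v) := by abel
      rw [this]
      exact add_mem (neg_mem (mem_sup_right (mem_span_singleton_self u))) (mem_sup_left h))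
  set T3 : Submodule (ZMod 2) (Fin 6 → ZMod 2) := L ⊔ span (ZMod 2) {(u + v)} with hT3def
  have hT2rk : finrank (ZMod 2) T2 = 3 := hrank3 v hvL
  have hT3rk : finrank (ZMod 2) T3 = 3 := hrank3 (u + v) huvL
  have hT2W : T2 ≤ W := sup_le hLW ((span_singleton_le_iff_mem _ _).mpr hvW)
  have hT3W : T3 ≤ W := sup_le hLW ((span_singleton_le_iff_mem _ _).mpr (W.add_mem huW hvW))
  have hLT1 : L ≤ T1 := le_sup_left
  have hLT2 : L ≤ T2 := le_sup_left
  have hLT3 : L ≤ T3 := le_sup_left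
  -- memberships
  have huT1 : u ∈ T1 := mem_sup_right (mem_span_singleton_self u)
  have hvT2 : v ∈ T2 := mem_sup_right (mem_span_singleton_self v)
  have huvT3 : u + v ∈ T3 := mem_sup_right (mem_span_singleton_self (u + v))
  -- distinctness
  have hne12 : T1 ≠ T2 := fun h => hvT1 (h ▸ hvT2)
  have hne13 : T1 ≠ T3 := by
    intro h
    apply hvT1
    have huv : u + v ∈ T1 := h ▸ huvT3
    have : v = (u + v) - u := by abel
    rw [this]
    exact T1.sub_mem huv huT1
  have hne23 : T2 ≠ T3 := by
    intro h
    have huv : u + v ∈ T2 := h ▸ huvT3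
    have huT2 : u ∈ T2 := by
      have : u = (u + v) - v := by abel
      rw [this]
      exact T2.sub_mem huv hvT2
    have hle : T1 ≤ T2 := sup_le hLT2 ((span_singleton_le_iff_mem _ _).mpr huT2)
    have : T1 = T2 := Submodule.eq_of_le_of_finrank_le hle (by omega)
    exact hvT1 (this ▸ hvT2)
  -- W = T1 ⊔ span v
  have hWeq : T1 ⊔ span (ZMod 2) {v} = W := by
    have hle : T1 ⊔ span (ZMod 2) {v} ≤ W :=
      sup_le hT1W ((span_singleton_le_iff_mem _ _).mpr hvW)
    apply Submodule.eq_of_le_of_finrank_le hle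
    have hlt : T1 < T1 ⊔ span (ZMod 2) {v} :=
      lt_of_le_of_ne le_sup_left
        (fun h => hvT1 (by rw [h]; exact mem_sup_right (mem_span_singleton_self v)))
    have := Submodule.finrank_lt_finrank_of_lt hlt
    omega
  -- the set of TI 3-spaces in W is {T1, T2, T3}
  have hsetEq : {T : Submodule (ZMod 2) (Fin 6 → ZMod 2) |
      T ≤ W ∧ IsTotallyIsotropic B T ∧ finrank (ZMod 2) T = 3} = {T1, T2, T3} := by
    ext T
    simp only [Set.mem_setOf_eq, Set.mem_insert_iff, Set.mem_singleton_iff]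
    constructor
    · rintro ⟨hTW, hTiso, hTrk⟩
      have hLT : L ≤ T := key T hTW hTiso hTrk
      obtain ⟨x, hxT, hxL⟩ := hexists L T (by omega)
      have hT := hsup T x hLT hTrk hxT hxL
      have hxW : x ∈ W := hTW hxT
      rw [← hWeq] at hxW
      obtain ⟨p, hp, z1, hz1, rfl⟩ := Submodule.mem_sup.mp hxW
      obtain ⟨b, rfl⟩ := Submodule.mem_span_singleton.mp hz1
      obtain ⟨l, hl, z2, hz2, rfl⟩ := Submodule.mem_sup.mp hp
      obtain ⟨a, rfl⟩ := Submodule.mem_span_singleton.mp hz2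
      have h01 : ∀ c : ZMod 2, c = 0 ∨ c = 1 := by decide
      rcases h01 a with rfl | rfl <;> rcases h01 b with rfl | rfl
      · exfalso; apply hxL; simpa using hl
      · right; left
        rw [hT]
        simp only [zero_smul, one_smul, add_zero, zero_add]
        rw [hshift l v hl]
      · left
        rw [hT]
        simp only [zero_smul, one_smul, add_zero, zero_add]
        rw [hshift l u hl]
      · right; right
        rw [hT]
        simp only [one_smul, add_assoc]
        rw [hshift l (u + v) hl]
    · rintro (rfl | rfl | rfl)
      · exact ⟨hT1W, hTIof _ hLT1 hT1W hT1rk, hT1rk⟩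
      · exact ⟨hT2W, hTIof _ hLT2 hT2W hT2rk, hT2rk⟩
      · exact ⟨hT3W, hTIof _ hLT3 hT3W hT3rk, hT3rk⟩
  constructor
  · have h3 : ({T1, T2, T3} : Set (Submodule (ZMod 2) (Fin 6 → ZMod 2))).ncard = 3 :=
      Set.ncard_eq_three.mpr ⟨T1, T2, T3, hne12, hne13, hne23, rfl⟩
    calc Nat.card {T : Submodule (ZMod 2) (Fin 6 → ZMod 2) //
          T ≤ W ∧ IsTotallyIsotropic B T ∧ finrank (ZMod 2) T = 3}
        = Nat.card ({T1, T2, T3} : Set (Submodule (ZMod 2) (Fin 6 → ZMod 2))) :=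
          Nat.card_congr (Equiv.subtypeEquiv (Equiv.refl _) fun T => Set.ext_iff.mp hsetEq T)
      _ = 3 := by rw [Nat.card_coe_set_eq]; exact h3
  · exact ⟨L, hLW, hLiso, hLrk, key⟩
end

section
/- Let F_2^8 carry a nondegenerate alternating form. If a 5-dimensional linear subspace W of F_2^8 contains a totally isotropic 4-dimensional subspace, then W contains exactly three totally isotropic 4-dimensional subspaces, and these pass through a common totally isotropic 3-dimensional subspace. -/
section Aux

variable {K V : Type*} [Field K] [AddCommGroup V] [Module K V]

lemma aux_finrank_sup_span [FiniteDimensional K V] (L : Submodule K V) {v : V} (hv : v ∉ L) :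
    Module.finrank K ↥(L ⊔ Submodule.span K {v}) = Module.finrank K L + 1 := by
  have hv0 : v ≠ 0 := fun h => hv (h ▸ L.zero_mem)
  have hdisj : L ⊓ Submodule.span K {v} = ⊥ :=
    ((Submodule.disjoint_span_singleton' hv0).mpr hv).eq_bot
  have := Submodule.finrank_sup_add_finrank_inf_eq L (Submodule.span K {v})
  rw [hdisj, finrank_bot, finrank_span_singleton hv0] at this
  omega

lemma aux_sup_span_add (L : Submodule K V) {a : V} (v : V) (ha : a ∈ L) :
    L ⊔ Submodule.span K {a + v} = L ⊔ Submodule.span K {v} := by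
  apply le_antisymm
  · refine sup_le le_sup_left ((Submodule.span_singleton_le_iff_mem _ _).mpr ?_)
    exact add_mem (Submodule.mem_sup_left ha)
      (Submodule.mem_sup_right (Submodule.mem_span_singleton_self v))
  · refine sup_le le_sup_left ((Submodule.span_singleton_le_iff_mem _ _).mpr ?_)
    have h1 : a + v ∈ L ⊔ Submodule.span K {a + v} :=
      Submodule.mem_sup_right (Submodule.mem_span_singleton_self _)
    have h2 : a ∈ L ⊔ Submodule.span K {a + v} := Submodule.mem_sup_left ha
    simpa using sub_mem h1 h2

end Aux

/-- If a 5-dimensional linear subspace `W` of `F_2^8` (with a nondegenerate alternating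
form) contains a totally isotropic 4-dimensional subspace, then it contains exactly three
such subspaces, and these pass through a common totally isotropic 3-dimensional subspace. -/
theorem three_ti_solids_through_common_plane
    (B : (Fin 8 → ZMod 2) →ₗ[ZMod 2] (Fin 8 → ZMod 2) →ₗ[ZMod 2] ZMod 2)
    (halt : ∀ x, B x x = 0)
    (hnd : ∀ x, (∀ y, B x y = 0) → x = 0)
    (W : Submodule (ZMod 2) (Fin 8 → ZMod 2))
    (hW : Module.finrank (ZMod 2) W = 5)
    (hex : ∃ T : Submodule (ZMod 2) (Fin 8 → ZMod 2),
      T ≤ W ∧ IsTotallyIsotropic B T ∧ Module.finrank (ZMod 2) T = 4) :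
    Nat.card {T : Submodule (ZMod 2) (Fin 8 → ZMod 2) //
        T ≤ W ∧ IsTotallyIsotropic B T ∧ Module.finrank (ZMod 2) T = 4} = 3 ∧
    ∃ L : Submodule (ZMod 2) (Fin 8 → ZMod 2),
      L ≤ W ∧ IsTotallyIsotropic B L ∧ Module.finrank (ZMod 2) L = 3 ∧
      ∀ T : Submodule (ZMod 2) (Fin 8 → ZMod 2),
        T ≤ W → IsTotallyIsotropic B T → Module.finrank (ZMod 2) T = 4 → L ≤ T := by
  classical
  have hrefl : LinearMap.IsRefl B := LinearMap.IsAlt.isRefl halt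
  have hndeg : LinearMap.BilinForm.Nondegenerate B :=
    hrefl.nondegenerate_iff_separatingLeft.mpr (fun x h => hnd x h)
  have hV : Module.finrank (ZMod 2) (Fin 8 → ZMod 2) = 8 := by simp
  obtain ⟨T0, hT0W, hT0I, hT0r⟩ := hex
  set L : Submodule (ZMod 2) (Fin 8 → ZMod 2) := LinearMap.BilinForm.orthogonal B W with hLdef
  -- a totally isotropic 4-dim subspace equals its own orthogonal
  have key : ∀ T : Submodule (ZMod 2) (Fin 8 → ZMod 2), T ≤ W → IsTotallyIsotropic B T →
      Module.finrank (ZMod 2) T = 4 → LinearMap.BilinForm.orthogonal B T = T := by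
    intro T hTW hTI hTr
    have hle : T ≤ LinearMap.BilinForm.orthogonal B T := fun x hx => fun n hn => hTI n hn x hx
    have hr : Module.finrank (ZMod 2) (LinearMap.BilinForm.orthogonal B T) = 4 := by
      rw [LinearMap.BilinForm.finrank_orthogonal hndeg, hV, hTr]
    exact (Submodule.eq_of_le_of_finrank_eq hle (by rw [hr, hTr])).symm
  have hLT : ∀ T : Submodule (ZMod 2) (Fin 8 → ZMod 2), T ≤ W → IsTotallyIsotropic B T →
      Module.finrank (ZMod 2) T = 4 → L ≤ T := by
    intro T hTW hTI hTr
    rw [← key T hTW hTI hTr]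
    exact LinearMap.BilinForm.orthogonal_le hTW
  have hLr : Module.finrank (ZMod 2) L = 3 := by
    rw [hLdef, LinearMap.BilinForm.finrank_orthogonal hndeg, hV, hW]
  have hLW : L ≤ W := (hLT T0 hT0W hT0I hT0r).trans hT0W
  have hLI : IsTotallyIsotropic B L := fun x hx y hy =>
    hT0I x (hLT T0 hT0W hT0I hT0r hx) y (hLT T0 hT0W hT0I hT0r hy)
  -- orthogonality between L and W
  have hBWL : ∀ w ∈ W, ∀ a ∈ L, B w a = 0 := fun w hw a ha => ha w hw
  have hBLW : ∀ a ∈ L, ∀ w ∈ W, B a w = 0 := fun a ha w hw => hrefl _ _ (hBWL w hw a ha)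
  -- any L ⊔ span{u} with u ∈ W is totally isotropic
  have hTIsup : ∀ u ∈ W, IsTotallyIsotropic B (L ⊔ Submodule.span (ZMod 2) {u}) := by
    intro u hu x hx y hy
    rw [Submodule.mem_sup] at hx hy
    obtain ⟨a, ha, x', hx', rfl⟩ := hx
    obtain ⟨b, hb, y', hy', rfl⟩ := hy
    rw [Submodule.mem_span_singleton] at hx' hy'
    obtain ⟨s, rfl⟩ := hx'
    obtain ⟨t, rfl⟩ := hy'
    simp only [map_add, map_smul, LinearMap.add_apply, LinearMap.smul_apply, smul_eq_mul]
    rw [hBLW a ha b (hLW hb), hBLW a ha u hu, hBWL u hu b hb, halt u]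
    ring
  -- pick v ∈ W \ L and w ∈ W \ (L ⊔ span v)
  have hLltW : L < W :=
    lt_of_le_of_ne hLW (fun h => by rw [h, hW] at hLr; exact absurd hLr (by norm_num))
  obtain ⟨v, hvW, hvL⟩ := SetLike.exists_of_lt hLltW
  set T1 := L ⊔ Submodule.span (ZMod 2) {v} with hT1def
  have hT1W : T1 ≤ W := sup_le hLW ((Submodule.span_singleton_le_iff_mem _ _).mpr hvW)
  have hT1r : Module.finrank (ZMod 2) T1 = 4 := by
    rw [hT1def, aux_finrank_sup_span L hvL, hLr]
  have hT1lt : T1 < W :=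
    lt_of_le_of_ne hT1W (fun h => by rw [h, hW] at hT1r; exact absurd hT1r (by norm_num))
  obtain ⟨w, hwW, hwT1⟩ := SetLike.exists_of_lt hT1lt
  have hvT1 : v ∈ T1 := Submodule.mem_sup_right (Submodule.mem_span_singleton_self v)
  have hwL : w ∉ L := fun h => hwT1 (Submodule.mem_sup_left h)
  have hvwL : v + w ∉ L := by
    intro h
    apply hwT1
    have h1 : v + w ∈ T1 := Submodule.mem_sup_left h
    simpa using sub_mem h1 hvT1
  -- W = T1 ⊔ span w
  have hWeq : T1 ⊔ Submodule.span (ZMod 2) {w} = W := by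
    apply Submodule.eq_of_le_of_finrank_eq
      (sup_le hT1W ((Submodule.span_singleton_le_iff_mem _ _).mpr hwW))
    rw [hW, aux_finrank_sup_span T1 hwT1, hT1r]
  set T2 := L ⊔ Submodule.span (ZMod 2) {w} with hT2def
  set T3 := L ⊔ Submodule.span (ZMod 2) {v + w} with hT3def
  -- the predicate
  set P : Submodule (ZMod 2) (Fin 8 → ZMod 2) → Prop := fun T =>
    T ≤ W ∧ IsTotallyIsotropic B T ∧ Module.finrank (ZMod 2) T = 4 with hPdef
  -- each Ti satisfies P
  have sat : ∀ u ∈ W, u ∉ L → P (L ⊔ Submodule.span (ZMod 2) {u}) := by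
    intro u hu hunL
    exact ⟨sup_le hLW ((Submodule.span_singleton_le_iff_mem _ _).mpr hu), hTIsup u hu,
      by rw [aux_finrank_sup_span L hunL, hLr]⟩
  -- completeness: every P-subspace is one of T1 T2 T3
  have complete : ∀ T, P T → T = T1 ∨ T = T2 ∨ T = T3 := by
    intro T ⟨hTW, hTI, hTr⟩
    have hLsubT : L ≤ T := hLT T hTW hTI hTr
    have hLltT : L < T :=
      lt_of_le_of_ne hLsubT (fun h => by rw [← h, hLr] at hTr; exact absurd hTr (by norm_num))
    obtain ⟨u, huT, huL⟩ := SetLike.exists_of_lt hLltT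
    have hTeq : T = L ⊔ Submodule.span (ZMod 2) {u} := by
      refine (Submodule.eq_of_le_of_finrank_eq
        (sup_le hLsubT ((Submodule.span_singleton_le_iff_mem _ _).mpr huT)) ?_).symm
      rw [hTr, aux_finrank_sup_span L huL, hLr]
    have huW : u ∈ W := hTW huT
    rw [← hWeq, Submodule.mem_sup] at huW
    obtain ⟨p, hp, y, hy, rfl⟩ := huW
    rw [hT1def, Submodule.mem_sup] at hp
    obtain ⟨a, ha, x, hx, rfl⟩ := hp
    rw [Submodule.mem_span_singleton] at hx hy
    obtain ⟨s, rfl⟩ := hx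
    obtain ⟨t, rfl⟩ := hy
    have hcases : ∀ c : ZMod 2, c = 0 ∨ c = 1 := by decide
    rcases hcases s with rfl | rfl <;> rcases hcases t with rfl | rfl
    · exfalso; apply huL; simpa using ha
    · right; left
      rw [hTeq]
      have h0 : a + (0 : ZMod 2) • v + (1 : ZMod 2) • w = a + w := by
        simp
      rw [h0, aux_sup_span_add L w ha, hT2def]
    · left
      rw [hTeq]
      have h0 : a + (1 : ZMod 2) • v + (0 : ZMod 2) • w = a + v := by
        simp
      rw [h0, aux_sup_span_add L v ha, hT1def]
    · right; right
      rw [hTeq]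
      have h0 : a + (1 : ZMod 2) • v + (1 : ZMod 2) • w = a + (v + w) := by
        simp [add_assoc]
      rw [h0, aux_sup_span_add L (v + w) ha, hT3def]
  -- distinctness
  have hwT2 : w ∈ T2 := Submodule.mem_sup_right (Submodule.mem_span_singleton_self w)
  have h12 : T1 ≠ T2 := by
    intro h
    apply hwT1
    rw [h]
    exact hwT2
  have h13 : T1 ≠ T3 := by
    intro h
    apply hwT1
    have hvw : v + w ∈ T1 := by
      rw [h]
      exact Submodule.mem_sup_right (Submodule.mem_span_singleton_self _)
    simpa using sub_mem hvw hvT1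
  have h23 : T2 ≠ T3 := by
    intro h
    have hvw : v + w ∈ T2 := by
      rw [h]
      exact Submodule.mem_sup_right (Submodule.mem_span_singleton_self _)
    have hv : v ∈ T2 := by
      have h1 : v + w - w = v := by abel
      rw [← h1]
      exact sub_mem hvw hwT2
    rw [hT2def, Submodule.mem_sup] at hv
    obtain ⟨b, hb, y, hy, hbv⟩ := hv
    rw [Submodule.mem_span_singleton] at hy
    obtain ⟨t, rfl⟩ := hy
    have hcases : ∀ c : ZMod 2, c = 0 ∨ c = 1 := by decide
    rcases hcases t with rfl | rfl
    · apply hvL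
      rw [← hbv]
      simpa using hb
    · apply hwT1
      have h1 : b + w = v := by simpa using hbv
      have h2 : w = v - b := by rw [← h1]; abel
      rw [h2]
      exact sub_mem hvT1 (Submodule.mem_sup_left hb)
  constructor
  · have hsetP : {T : Submodule (ZMod 2) (Fin 8 → ZMod 2) | P T} = {T1, T2, T3} := by
      ext T
      simp only [Set.mem_setOf_eq, Set.mem_insert_iff, Set.mem_singleton_iff]
      constructor
      · exact complete T
      · rintro (rfl | rfl | rfl)
        · exact sat v hvW hvL
        · exact sat w hwW hwL
        · exact sat (v + w) (add_mem hvW hwW) hvwL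
    have hc : Nat.card {T : Submodule (ZMod 2) (Fin 8 → ZMod 2) //
        T ≤ W ∧ IsTotallyIsotropic B T ∧ Module.finrank (ZMod 2) T = 4} =
        ({T : Submodule (ZMod 2) (Fin 8 → ZMod 2) | P T}).ncard :=
      Nat.card_coe_set_eq _
    rw [hc]
    exact Set.ncard_eq_three.mpr ⟨T1, T2, T3, h12, h13, h23, hsetP⟩
  · exact ⟨L, hLW, hLI, hLr, hLT⟩
end

section
/- For N ≥ 3, define D_q(N) = 16·([2N choose 5]_2 − [N choose 5]_2 · ∏_{i=1}^{5}(2^{N+1-i}+1) − 15·[N choose 4]_2 · 2^{2N-8} · ∏_{i=1}^{4}(2^{N+1-i}+1)/3). Then D_q(N) = (4^{N-2} − 1) · D_l(N), where D_l(N) = [2N choose 4]_2 − [N choose 4]_2 · ∏_{i=1}^{4}(2^{N+1-i}+1) − 7·[N choose 3]_2 · 2^{2N-6} · ∏_{i=1}^{3}(2^{N+1-i}+1)/3. -/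
/-- The Gaussian binomial coefficient `[n choose k]_q`. -/
def gaussBinom (q n k : ℕ) : ℕ :=
  (∏ i ∈ Finset.range k, (q ^ (n - i) - 1)) / ∏ i ∈ Finset.range k, (q ^ (i + 1) - 1)

/-- The number of linear `N`-qubit doilies:
`D_l(N) = [2N 4]_2 − [N 4]_2·∏_{i=1}^{4}(2^{N+1-i}+1) − 7·[N 3]_2·2^{2N-6}·∏_{i=1}^{3}(2^{N+1-i}+1)/3`. -/
noncomputable def DlQ (N : ℕ) : ℚ :=
  (gaussBinom 2 (2 * N) 4 : ℚ)
    - (gaussBinom 2 N 4 : ℚ) * ∏ i ∈ Finset.range 4, ((2 : ℚ) ^ (N - i) + 1)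
    - 7 * (gaussBinom 2 N 3 : ℚ) * (2 : ℚ) ^ (2 * N - 6) *
        (∏ i ∈ Finset.range 3, ((2 : ℚ) ^ (N - i) + 1)) / 3

/-- The number of quadratic `N`-qubit doilies:
`D_q(N) = 16·([2N 5]_2 − [N 5]_2·∏_{i=1}^{5}(2^{N+1-i}+1) − 15·[N 4]_2·2^{2N-8}·∏_{i=1}^{4}(2^{N+1-i}+1)/3)`. -/
noncomputable def DqQ (N : ℕ) : ℚ :=
  16 * ((gaussBinom 2 (2 * N) 5 : ℚ)
    - (gaussBinom 2 N 5 : ℚ) * ∏ i ∈ Finset.range 5, ((2 : ℚ) ^ (N - i) + 1)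
    - 15 * (gaussBinom 2 N 4 : ℚ) * (2 : ℚ) ^ (2 * N - 8) *
        (∏ i ∈ Finset.range 4, ((2 : ℚ) ^ (N - i) + 1)) / 3)

/-- In a monoid, if `a ^ d = 1` then powers of `a` are periodic with period `d`. -/
lemma pow_cycle {M : Type*} [Monoid M] (a : M) (d : ℕ) (h : a ^ d = 1) (m : ℕ) :
    a ^ m = a ^ (m % d) := by
  conv_lhs => rw [← Nat.div_add_mod m d, pow_add, pow_mul, h, one_pow, one_mul]

/-- Generic divisibility criterion for the numerator of a Gaussian binomial `[n choose k]_2`,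
checked via periodicity of powers of `2` modulo `D`. -/
lemma dvd_gauss_num (D d k n : ℕ) (hd0 : 0 < d) (hn : k - 1 ≤ n)
    (hd : (2 : ZMod D) ^ d = 1)
    (H : ∀ r < d, ∏ i ∈ Finset.range k, ((2 : ZMod D) ^ ((r + (k - 1 - i)) % d) - 1) = 0) :
    D ∣ ∏ i ∈ Finset.range k, (2 ^ (n - i) - 1) := by
  obtain ⟨m, rfl⟩ := Nat.exists_eq_add_of_le hn
  rw [← ZMod.natCast_eq_zero_iff, Nat.cast_prod]
  have key : ∀ i ∈ Finset.range k,
      ((2 ^ (k - 1 + m - i) - 1 : ℕ) : ZMod D)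
        = (2 : ZMod D) ^ ((m % d + (k - 1 - i)) % d) - 1 := by
    intro i hi
    rw [Finset.mem_range] at hi
    have h1 : k - 1 + m - i = m + (k - 1 - i) := by omega
    rw [h1]
    push_cast [Nat.one_le_two_pow]
    rw [pow_add, pow_cycle _ d hd m, ← pow_add, pow_cycle _ d hd]
  rw [Finset.prod_congr rfl key]
  exact H (m % d) (Nat.mod_lt _ hd0)

/-- Casting a Gaussian binomial (with exact natural division) to `ℚ`. -/
lemma gauss_cast (n k D : ℕ) (hD0 : 0 < D)
    (hD : ∏ i ∈ Finset.range k, (2 ^ (i + 1) - 1) = D)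
    (h : D ∣ ∏ i ∈ Finset.range k, (2 ^ (n - i) - 1)) :
    (gaussBinom 2 n k : ℚ) = (∏ i ∈ Finset.range k, ((2 : ℚ) ^ (n - i) - 1)) / (D : ℚ) := by
  unfold gaussBinom
  rw [hD, Nat.cast_div h (by exact_mod_cast hD0.ne')]
  congr 1
  rw [Nat.cast_prod]
  exact Finset.prod_congr rfl fun i _ => by push_cast [Nat.one_le_two_pow]; ring

lemma gauss3 (n : ℕ) (h : 2 ≤ n) :
    (gaussBinom 2 n 3 : ℚ) = (∏ i ∈ Finset.range 3, ((2 : ℚ) ^ (n - i) - 1)) / 21 := by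
  rw [gauss_cast n 3 21 (by norm_num) (by decide)
    (dvd_gauss_num 21 6 3 n (by norm_num) h (by decide) (by decide))]
  norm_num

lemma gauss4 (n : ℕ) (h : 3 ≤ n) :
    (gaussBinom 2 n 4 : ℚ) = (∏ i ∈ Finset.range 4, ((2 : ℚ) ^ (n - i) - 1)) / 315 := by
  rw [gauss_cast n 4 315 (by norm_num) (by decide)
    (dvd_gauss_num 315 12 4 n (by norm_num) h (by decide) (by decide))]
  norm_num

lemma gauss5 (n : ℕ) (h : 4 ≤ n) :
    (gaussBinom 2 n 5 : ℚ) = (∏ i ∈ Finset.range 5, ((2 : ℚ) ^ (n - i) - 1)) / 9765 := by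
  rw [gauss_cast n 5 9765 (by norm_num) (by decide)
    (dvd_gauss_num 9765 60 5 n (by norm_num) h (by decide) (by decide))]
  norm_num

/-- For `N ≥ 3`, `D_q(N) = (4^{N-2} − 1) · D_l(N)`. -/
theorem DqQ_eq_mul_DlQ (N : ℕ) (hN : 3 ≤ N) :
    DqQ N = ((4 : ℚ) ^ (N - 2) - 1) * DlQ N := by
  obtain h3 | h4 | h5 : N = 3 ∨ N = 4 ∨ 5 ≤ N := by omega
  · subst h3
    unfold DqQ DlQ
    norm_num [gaussBinom, Finset.prod_range_succ]
  · subst h4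
    unfold DqQ DlQ
    norm_num [gaussBinom, Finset.prod_range_succ]
  · obtain ⟨M, rfl⟩ : ∃ M, N = M + 5 := ⟨N - 5, by omega⟩
    unfold DqQ DlQ
    rw [gauss5 (2 * (M + 5)) (by omega), gauss5 (M + 5) (by omega),
      gauss4 (2 * (M + 5)) (by omega), gauss4 (M + 5) (by omega),
      gauss3 (M + 5) (by omega)]
    simp only [Finset.prod_range_succ, Finset.prod_range_zero, one_mul]
    simp only [show 2 * (M + 5) = 2 * M + 10 from by omega,
      show 2 * M + 10 - 1 = 2 * M + 9 from by omega,
      show 2 * M + 10 - 2 = 2 * M + 8 from by omega,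
      show 2 * M + 10 - 3 = 2 * M + 7 from by omega,
      show 2 * M + 10 - 4 = 2 * M + 6 from by omega,
      show 2 * M + 10 - 6 = 2 * M + 4 from by omega,
      show 2 * M + 10 - 8 = 2 * M + 2 from by omega,
      show M + 5 - 1 = M + 4 from by omega,
      show M + 5 - 2 = M + 3 from by omega,
      show M + 5 - 3 = M + 2 from by omega,
      show M + 5 - 4 = M + 1 from by omega,
      Nat.sub_zero]
    simp only [show ∀ c : ℕ, (2 : ℚ) ^ (2 * M + c) = ((2 : ℚ) ^ M) ^ 2 * 2 ^ c from
        fun c => by rw [pow_add, two_mul, pow_add]; ring,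
      show ∀ c : ℕ, (2 : ℚ) ^ (M + c) = (2 : ℚ) ^ M * 2 ^ c from fun c => by rw [pow_add],
      show ∀ c : ℕ, (4 : ℚ) ^ (M + c) = ((2 : ℚ) ^ M) ^ 2 * 4 ^ c from
        fun c => by rw [show (4:ℚ) = 2 ^ 2 from by norm_num, pow_add, ← pow_mul,
          mul_comm 2 M, pow_mul]]
    ring
end

section
/- For N ≥ 2, D_l(N) = (4/15) · 4^{N-3} · Θ_2(N), where D_l(N) = [2N choose 4]_2 − [N choose 4]_2·∏_{i=1}^{4}(2^{N+1-i}+1) − 7·[N choose 3]_2·2^{2N-6}·∏_{i=1}^{3}(2^{N+1-i}+1)/3 and Θ_2(N) = (1/16)·2^{2N}·∏_{i=1}^{2} (2^{N-2+i}−1)/(2^i−1) · ∏_{i=1}^{2}(2^{N+1-i}+1). -/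
/-- `Θ_2(N) = (1/16)·2^{2N}·∏_{i=1}^{2} (2^{N-2+i}−1)/(2^i−1) · ∏_{i=1}^{2}(2^{N+1-i}+1)`,
the number of planes `PG(2,2)` of `PG(2N-1,2)` with exactly three totally isotropic lines. -/
noncomputable def Theta2 (N : ℕ) : ℚ :=
  (1 / 16) * (2 : ℚ) ^ (2 * N) *
    (∏ i ∈ Finset.range 2, (((2 : ℚ) ^ (N - 1 + i) - 1) / ((2 : ℚ) ^ (i + 1) - 1))) *
    ∏ i ∈ Finset.range 2, ((2 : ℚ) ^ (N - i) + 1)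

lemma two_pow_12 : (2 : ZMod 315) ^ 12 = 1 := by decide

lemma two_pow_6' : (2 : ZMod 21) ^ 6 = 1 := by decide

lemma castsub (k : ℕ) : ((2 ^ k - 1 : ℕ) : ℚ) = 2 ^ k - 1 := by
  have := Nat.one_le_two_pow (n := k)
  push_cast [this]; ring

lemma castsubZ (n : ℕ) (k : ℕ) : ((2 ^ k - 1 : ℕ) : ZMod n) = 2 ^ k - 1 := by
  have := Nat.one_le_two_pow (n := k)
  push_cast [this]; ring

lemma dvd315 (m : ℕ) :
    315 ∣ (2^(m+3)-1)*((2^(m+2)-1)*((2^(m+1)-1)*(2^m-1))) := by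
  rw [← ZMod.natCast_eq_zero_iff]
  push_cast [castsubZ]
  obtain ⟨q, r, hr, rfl⟩ : ∃ q r, r < 12 ∧ m = 12*q + r :=
    ⟨m / 12, m % 12, Nat.mod_lt _ (by norm_num), (Nat.div_add_mod m 12).symm⟩
  have h2 : ∀ j : ℕ, (2 : ZMod 315)^(12*q + r + j) = 2^(r+j) := by
    intro j
    rw [show 12*q+r+j = 12*q+(r+j) by omega, pow_add, pow_mul, two_pow_12, one_pow, one_mul]
  rw [h2 3, h2 2, h2 1, show (2:ZMod 315)^(12*q+r) = 2^(r+0) by simpa using h2 0]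
  interval_cases r <;> decide

lemma dvd21 (m : ℕ) :
    21 ∣ (2^(m+2)-1)*((2^(m+1)-1)*(2^m-1)) := by
  rw [← ZMod.natCast_eq_zero_iff]
  push_cast [castsubZ]
  obtain ⟨q, r, hr, rfl⟩ : ∃ q r, r < 6 ∧ m = 6*q + r :=
    ⟨m / 6, m % 6, Nat.mod_lt _ (by norm_num), (Nat.div_add_mod m 6).symm⟩
  have h2 : ∀ j : ℕ, (2 : ZMod 21)^(6*q + r + j) = 2^(r+j) := by
    intro j
    rw [show 6*q+r+j = 6*q+(r+j) by omega, pow_add, pow_mul, two_pow_6', one_pow, one_mul]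
  rw [h2 2, h2 1, show (2:ZMod 21)^(6*q+r) = 2^(r+0) by simpa using h2 0]
  interval_cases r <;> decide

lemma gauss4_s15 (n : ℕ) : ((gaussBinom 2 (n+3) 4 : ℕ) : ℚ) =
    ((2:ℚ)^(n+3)-1)*(((2:ℚ)^(n+2)-1)*(((2:ℚ)^(n+1)-1)*((2:ℚ)^n-1)))/315 := by
  unfold gaussBinom
  have hden : ∏ i ∈ Finset.range 4, (2 ^ (i + 1) - 1) = 315 := by decide
  have hnum : ∏ i ∈ Finset.range 4, (2 ^ (n+3 - i) - 1)
      = (2^(n+3)-1)*((2^(n+2)-1)*((2^(n+1)-1)*(2^n-1))) := by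
    rw [Finset.prod_range_succ, Finset.prod_range_succ, Finset.prod_range_succ,
      Finset.prod_range_one]
    have e1 : n+3-1 = n+2 := by omega
    have e2 : n+3-2 = n+1 := by omega
    have e3 : n+3-3 = n := by omega
    rw [Nat.sub_zero, e1, e2, e3]; ring
  rw [hden, hnum, Nat.cast_div (dvd315 n) (by norm_num)]
  push_cast [castsub]
  norm_num

lemma gauss3_s15 (n : ℕ) : ((gaussBinom 2 (n+2) 3 : ℕ) : ℚ) =
    ((2:ℚ)^(n+2)-1)*(((2:ℚ)^(n+1)-1)*((2:ℚ)^n-1))/21 := by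
  unfold gaussBinom
  have hden : ∏ i ∈ Finset.range 3, (2 ^ (i + 1) - 1) = 21 := by decide
  have hnum : ∏ i ∈ Finset.range 3, (2 ^ (n+2 - i) - 1)
      = (2^(n+2)-1)*((2^(n+1)-1)*(2^n-1)) := by
    rw [Finset.prod_range_succ, Finset.prod_range_succ, Finset.prod_range_one]
    have e1 : n+2-1 = n+1 := by omega
    have e2 : n+2-2 = n := by omega
    rw [Nat.sub_zero, e1, e2]; ring
  rw [hden, hnum, Nat.cast_div (dvd21 n) (by norm_num)]
  push_cast [castsub]
  norm_num

/-- For `N ≥ 2`, `D_l(N) = (4/15) · 4^{N-3} · Θ_2(N)`. -/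
theorem DlQ_eq_theta2 (N : ℕ) (hN : 2 ≤ N) :
    DlQ N = (4 / 15) * (4 : ℚ) ^ ((N : ℤ) - 3) * Theta2 N := by
  obtain ⟨M, rfl⟩ | rfl : (∃ M, N = M + 3) ∨ N = 2 := by
    rcases Nat.lt_or_ge N 3 with h | h
    · right; omega
    · left; exact ⟨N - 3, by omega⟩
  · -- N = M + 3
    unfold DlQ Theta2
    rw [show 2 * (M+3) = (2*M+3)+3 by ring, gauss4_s15 (2*M+3), gauss4_s15 M,
      show M+3 = (M+1)+2 from rfl, gauss3_s15 (M+1)]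
    simp only [Finset.prod_range_succ, Finset.prod_range_zero, one_mul]
    rw [show M+1+2-0 = M+3 by omega, show M+1+2-1 = M+2 by omega,
      show M+1+2-2 = M+1 by omega, show M+1+2-3 = M by omega,
      show 2*M+3+3-6 = M+M by omega, show M+2+0 = M+2 by omega,
      show M+2+1 = M+3 by omega, show M+1+2 = M+3 by omega,
      show M+1+1 = M+2 by omega]
    rw [show (((M+3 : ℕ) : ℤ) - 3) = (M : ℤ) by push_cast; ring, zpow_natCast]
    rw [show (4:ℚ) = 2^2 by norm_num, ← pow_mul]
    rw [show 2*M+3+3 = M+(M+6) by ring, show 2*M+3+2 = M+(M+5) by ring,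
      show 2*M+3+1 = M+(M+4) by ring, show 2*M+3 = M+(M+3) by omega]
    simp only [pow_add]
    field_simp
    ring
  · -- N = 2
    unfold DlQ Theta2
    norm_num [Finset.prod_range_succ,
      show gaussBinom 2 4 4 = 1 by decide, show gaussBinom 2 2 4 = 0 by decide,
      show gaussBinom 2 2 3 = 0 by decide,
      show ((2:ℤ)-3) = -1 by ring]
end

section
/- For N ≥ 3, D_q(N) = (48/15) · 4^{N-3} · Θ_3(N), where D_q(N) = 16·([2N choose 5]_2 − [N choose 5]_2·∏_{i=1}^{5}(2^{N+1-i}+1) − 15·[N choose 4]_2·2^{2N-8}·∏_{i=1}^{4}(2^{N+1-i}+1)/3) and Θ_3(N) = (7/3)·2^{2N-6}·∏_{i=1}^{3} (2^{N-3+i}−1)/(2^i−1) · ∏_{i=1}^{3}(2^{N+1-i}+1). -/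
/-- `Θ_3(N) = (7/3)·2^{2N-6}·∏_{i=1}^{3} (2^{N-3+i}−1)/(2^i−1) · ∏_{i=1}^{3}(2^{N+1-i}+1)`,
the number of `PG(3,2)`s of `PG(2N-1,2)` with exactly three totally isotropic planes. -/
noncomputable def Theta3 (N : ℕ) : ℚ :=
  (7 / 3) * (2 : ℚ) ^ (2 * N - 6) *
    (∏ i ∈ Finset.range 3, (((2 : ℚ) ^ (N - 2 + i) - 1) / ((2 : ℚ) ^ (i + 1) - 1))) *
    ∏ i ∈ Finset.range 3, ((2 : ℚ) ^ (N - i) + 1)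

open Finset in
/-- Integrality of the Gaussian binomial coefficient for `q = 2`:
the denominator product divides the numerator product. -/
lemma den_dvd_num (n k : ℕ) :
    (∏ i ∈ range k, (2 ^ (i + 1) - 1)) ∣ ∏ i ∈ range k, (2 ^ (n - i) - 1) := by
  induction n generalizing k with
  | zero =>
    cases k with
    | zero => simp
    | succ k' =>
      have : (0:ℕ) ∈ range (k'+1) := by simp
      have h0 : ∏ i ∈ range (k'+1), (2 ^ (0 - i) - 1) = 0 := by
        apply Finset.prod_eq_zero this; simp
      simp [h0]
  | succ n ih =>
    cases k with
    | zero => simp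
    | succ k' =>
      by_cases hk : k' + 1 ≤ n + 1
      · have hnum : ∏ i ∈ range (k'+1), (2 ^ (n + 1 - i) - 1)
            = (2 ^ (n+1) - 1) * ∏ i ∈ range k', (2 ^ (n - i) - 1) := by
          rw [Finset.prod_range_succ'] -- splits off i = 0
          simp [Nat.succ_sub_succ]
          ring
        have key : 2 ^ (n+1) - 1 = 2 ^ (k'+1) * (2 ^ (n - k') - 1) + (2 ^ (k'+1) - 1) := by
          have hk' : k' ≤ n := by omega
          have : 2 ^ (k'+1) * 2 ^ (n - k') = 2 ^ (n+1) := by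
            rw [← pow_add]; congr 1; omega
          have h1 : 1 ≤ 2 ^ (n - k') := Nat.one_le_two_pow
          have h2 : (1:ℕ) ≤ 2 ^ (k'+1) := Nat.one_le_two_pow
          have h3 : 2 ^ (k'+1) * (2 ^ (n - k') - 1) = 2 ^ (n+1) - 2 ^ (k'+1) := by
            rw [Nat.mul_sub, this]; simp
          have h4 : 2 ^ k' ≤ 2 ^ n := Nat.pow_le_pow_right (by norm_num) hk'
          omega
        have hnum2 : ∏ i ∈ range (k'+1), (2 ^ (n - i) - 1)
            = (∏ i ∈ range k', (2 ^ (n - i) - 1)) * (2 ^ (n - k') - 1) :=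
          Finset.prod_range_succ _ _
        rw [hnum, key]
        rw [add_mul]
        apply dvd_add
        · have heq : 2 ^ (k'+1) * (2 ^ (n - k') - 1) * ∏ i ∈ range k', (2 ^ (n - i) - 1)
              = 2 ^ (k'+1) * ∏ i ∈ range (k'+1), (2 ^ (n - i) - 1) := by
            rw [hnum2]; ring
          rw [heq]
          exact Dvd.dvd.mul_left (ih (k'+1)) _
        · rw [Finset.prod_range_succ, mul_comm ((2:ℕ) ^ (k'+1) - 1)]
          exact mul_dvd_mul (ih k') dvd_rfl
      · have hmem : n + 1 ∈ range (k'+1) := by simp; omega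
        have h0 : ∏ i ∈ range (k'+1), (2 ^ (n + 1 - i) - 1) = 0 :=
          Finset.prod_eq_zero hmem (by simp)
        simp [h0]

lemma cast_two_pow_sub_one (m : ℕ) : ((2 ^ m - 1 : ℕ) : ℚ) = (2:ℚ)^m - 1 := by
  rw [Nat.cast_sub Nat.one_le_two_pow]; push_cast; ring

open Finset in
lemma gaussBinom_cast (n k : ℕ) : (gaussBinom 2 n k : ℚ)
    = (∏ i ∈ range k, ((2:ℚ)^(n-i) - 1)) / (∏ i ∈ range k, ((2:ℚ)^(i+1) - 1)) := by
  have hpos : 0 < ∏ i ∈ range k, (2 ^ (i + 1) - 1 : ℕ) := by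
    apply Finset.prod_pos
    intro i _
    have : (2:ℕ) ≤ 2 ^ (i+1) := by
      calc (2:ℕ) = 2^1 := by norm_num
        _ ≤ 2^(i+1) := Nat.pow_le_pow_right (by norm_num) (by omega)
    omega
  rw [gaussBinom, Nat.cast_div (den_dvd_num n k) (by exact_mod_cast hpos.ne')]
  rw [Nat.cast_prod, Nat.cast_prod]
  simp only [cast_two_pow_sub_one]

/-- For `N ≥ 3`, `D_q(N) = (48/15) · 4^{N-3} · Θ_3(N)`. -/
theorem DqQ_eq_theta3 (N : ℕ) (hN : 3 ≤ N) :
    DqQ N = (48 / 15) * (4 : ℚ) ^ ((N : ℤ) - 3) * Theta3 N := by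
  rcases Nat.lt_or_ge N 4 with h4 | h4
  · -- N = 3
    have : N = 3 := by omega
    subst this
    norm_num [DqQ, Theta3, gaussBinom_cast, Finset.prod_range_succ]
  · obtain ⟨m, rfl⟩ : ∃ m, N = m + 4 := ⟨N - 4, by omega⟩
    have hz : ((m + 4 : ℕ) : ℤ) - 3 = ((m + 1 : ℕ) : ℤ) := by push_cast; ring
    rw [hz, zpow_natCast]
    have h4' : (4:ℚ) = 2^2 := by norm_num
    rw [h4', ← pow_mul]
    have h2N : 2 * (m + 4) = 2 * m + 8 := by ring
    rw [DqQ, Theta3, h2N, gaussBinom_cast, gaussBinom_cast, gaussBinom_cast]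
    simp only [Finset.prod_range_succ, Finset.prod_range_zero,
      show m+4-1 = m+3 from by omega, show m+4-2 = m+2 from by omega,
      show m+4-3 = m+1 from by omega, show m+4-4 = m from by omega,
      show m+4-0 = m+4 from by omega,
      show 2*m+8-1 = 2*m+7 from by omega, show 2*m+8-2 = 2*m+6 from by omega,
      show 2*m+8-3 = 2*m+5 from by omega, show 2*m+8-4 = 2*m+4 from by omega,
      show 2*m+8-0 = 2*m+8 from by omega,
      show 2*m+8-8 = 2*m from by omega, show 2*m+8-6 = 2*m+2 from by omega]
    norm_num
    field_simp
    ring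
end
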